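/- Let p ∈ [-1,1] be a nonzero real number, let 𝒜 and ℬ be unital C*-algebras, and let φ : 𝒜⁺⁺ → ℬ⁺⁺ be a norm-continuous bijective map satisfying φ(A 𝔪ₚ B) = φ(A) 𝔪ₚ φ(B) for all A, B ∈ 𝒜⁺⁺. Then φ is positively homogeneous: φ(tA) = t φ(A) for every real t > 0 and every A ∈ 𝒜⁺⁺. -/

import Mathlib

open scoped NNReal

/-- The positive definite cone of a unital C*-algebra: the invertible positive elements. -/
def posDefCone (A : Type*) [CStarAlgebra A] [PartialOrder A] [StarOrderedRing A] : Set A :=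
  {a : A | 0 ≤ a ∧ IsUnit a}

variable {A B : Type*} [CStarAlgebra A] [PartialOrder A] [StarOrderedRing A]
  [CStarAlgebra B] [PartialOrder B] [StarOrderedRing B]

/-- The Kubo–Ando `p`-th power mean
`a^(1/2) ((1 + (a^(-1/2) b a^(-1/2))^p)/2)^(1/p) a^(1/2)` on the positive definite cone. -/
noncomputable def kuboAndoPowerMean (p : ℝ) (a b : A) : A :=
  a ^ ((2 : ℝ)⁻¹) *
    ((2 : ℝ)⁻¹ • (1 + (a ^ (-(2 : ℝ)⁻¹) * b * a ^ (-(2 : ℝ)⁻¹)) ^ p)) ^ p⁻¹ *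
    a ^ ((2 : ℝ)⁻¹)

namespace KAP

variable {C : Type*} [CStarAlgebra C] [PartialOrder C] [StarOrderedRing C]

lemma cone_nonneg {a : C} (h : a ∈ posDefCone C) : 0 ≤ a := h.1
lemma cone_isUnit {a : C} (h : a ∈ posDefCone C) : IsUnit a := h.2

lemma cone_spec_nnreal {a : C} (h : a ∈ posDefCone C) : (0:ℝ≥0) ∉ spectrum ℝ≥0 a :=
  spectrum.zero_notMem ℝ≥0 h.2

lemma cone_spec_pos {a : C} (h : a ∈ posDefCone C) : ∀ x ∈ spectrum ℝ a, 0 < x := by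
  intro x hx
  rcases (spectrum_nonneg_of_nonneg h.1 hx).lt_or_eq with h' | h'
  · exact h'
  · exact absurd (h' ▸ hx) (spectrum.zero_notMem ℝ h.2)

lemma one_mem_cone : (1:C) ∈ posDefCone C :=
  ⟨by simpa using star_mul_self_nonneg (1:C), isUnit_one⟩

lemma smul_mem_cone {t : ℝ} (ht : 0 < t) {a : C} (h : a ∈ posDefCone C) :
    t • a ∈ posDefCone C := by
  refine ⟨smul_nonneg ht.le h.1, ?_⟩
  have := h.2.smul (Units.mk0 t ht.ne')
  simpa using this

/-- real rpow as a real cfc -/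
lemma rpow_eq_cfc_real {a : C} (ha : 0 ≤ a) (y : ℝ) :
    a ^ y = cfc (fun x : ℝ => x ^ y) a := by
  rw [CFC.rpow_def, cfc_nnreal_eq_real _ a ha]
  apply cfc_congr
  intro x hx
  have hx' : 0 ≤ x := spectrum_nonneg_of_nonneg ha hx
  simp [NNReal.coe_rpow, Real.coe_toNNReal x hx']

lemma rpow_selfAdjoint (a : C) (y : ℝ) : star (a ^ y) = a ^ y :=
  (IsSelfAdjoint.of_nonneg CFC.rpow_nonneg)

lemma rpow_mem_cone {a : C} (h : a ∈ posDefCone C) (y : ℝ) :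
    a ^ y ∈ posDefCone C := by
  refine ⟨CFC.rpow_nonneg, ?_⟩
  rw [rpow_eq_cfc_real h.1 y]
  have hcont : ContinuousOn (fun x : ℝ => x ^ y) (spectrum ℝ a) := by
    intro x hx
    exact (Real.continuousAt_rpow_const x y (Or.inl (cone_spec_pos h x hx).ne')).continuousWithinAt
  refine isUnit_cfc _ a hcont (IsSelfAdjoint.of_nonneg h.1) ?_
  intro x hx
  exact (Real.rpow_pos_of_pos (cone_spec_pos h x hx) y).ne'

lemma rpow_mul_rpow {a : C} (h : a ∈ posDefCone C) (x y : ℝ) :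
    a ^ x * a ^ y = a ^ (x + y) :=
  (CFC.rpow_add h.2).symm

lemma sq_mul_sq {a : C} (h : a ∈ posDefCone C) :
    a ^ ((2:ℝ)⁻¹) * a ^ ((2:ℝ)⁻¹) = a := by
  rw [rpow_mul_rpow h]
  norm_num
  exact CFC.rpow_one a h.1

lemma sq_mul_isq {a : C} (h : a ∈ posDefCone C) :
    a ^ ((2:ℝ)⁻¹) * a ^ (-(2:ℝ)⁻¹) = 1 := by
  rw [rpow_mul_rpow h]
  norm_num
  exact CFC.rpow_zero a h.1

lemma isq_mul_sq {a : C} (h : a ∈ posDefCone C) :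
    a ^ (-(2:ℝ)⁻¹) * a ^ ((2:ℝ)⁻¹) = 1 := by
  rw [rpow_mul_rpow h]
  norm_num
  exact CFC.rpow_zero a h.1

lemma isq_mul_isq {a : C} (h : a ∈ posDefCone C) :
    a ^ (-(2:ℝ)⁻¹) * a ^ (-(2:ℝ)⁻¹) = a ^ (-1:ℝ) := by
  rw [rpow_mul_rpow h]
  norm_num

lemma conj_isq_sq {a : C} (h : a ∈ posDefCone C) (z : C) :
    a ^ (-(2:ℝ)⁻¹) * (a ^ ((2:ℝ)⁻¹) * z * a ^ ((2:ℝ)⁻¹)) * a ^ (-(2:ℝ)⁻¹) = z := by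
  have h1 := isq_mul_sq h
  have h2 := sq_mul_isq h
  calc a ^ (-(2:ℝ)⁻¹) * (a ^ ((2:ℝ)⁻¹) * z * a ^ ((2:ℝ)⁻¹)) * a ^ (-(2:ℝ)⁻¹)
      = (a ^ (-(2:ℝ)⁻¹) * a ^ ((2:ℝ)⁻¹)) * z * (a ^ ((2:ℝ)⁻¹) * a ^ (-(2:ℝ)⁻¹)) := by
        simp only [mul_assoc]
    _ = z := by rw [h1, h2]; simp

lemma conj_sq_isq {a : C} (h : a ∈ posDefCone C) (z : C) :
    a ^ ((2:ℝ)⁻¹) * (a ^ (-(2:ℝ)⁻¹) * z * a ^ (-(2:ℝ)⁻¹)) * a ^ ((2:ℝ)⁻¹) = z := by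
  have h1 := isq_mul_sq h
  have h2 := sq_mul_isq h
  calc a ^ ((2:ℝ)⁻¹) * (a ^ (-(2:ℝ)⁻¹) * z * a ^ (-(2:ℝ)⁻¹)) * a ^ ((2:ℝ)⁻¹)
      = (a ^ ((2:ℝ)⁻¹) * a ^ (-(2:ℝ)⁻¹)) * z * (a ^ (-(2:ℝ)⁻¹) * a ^ ((2:ℝ)⁻¹)) := by
        simp only [mul_assoc]
    _ = z := by rw [h1, h2]; simp

/-- the "pencil" element `a^{-1/2} b a^{-1/2}` -/
lemma pencil_mem_cone {a b : C} (ha : a ∈ posDefCone C) (hb : b ∈ posDefCone C) :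
    a ^ (-(2:ℝ)⁻¹) * b * a ^ (-(2:ℝ)⁻¹) ∈ posDefCone C := by
  constructor
  · have := star_left_conjugate_nonneg hb.1 (a ^ (-(2:ℝ)⁻¹))
    rwa [rpow_selfAdjoint] at this
  · exact ((rpow_mem_cone ha _).2.mul hb.2).mul (rpow_mem_cone ha _).2

end KAP

namespace KAP

noncomputable def fp (p x : ℝ) : ℝ := (2⁻¹ * (1 + x ^ p)) ^ p⁻¹

noncomputable def hq (p x : ℝ) : ℝ := (max (2 * x ^ p - 1) 0) ^ p⁻¹

noncomputable def kp (p : ℝ) : ℝ := (2⁻¹ : ℝ) ^ p⁻¹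

noncomputable def Mp (p s t : ℝ) : ℝ := (2⁻¹ * (s ^ p + t ^ p)) ^ p⁻¹

variable {p : ℝ}

lemma cont_rpow_const (e : ℝ) (he : 0 ≤ e) : Continuous (fun x : ℝ => x ^ e) := by
  rw [continuous_iff_continuousAt]
  exact fun x => Real.continuousAt_rpow_const x e (Or.inr he)

lemma fp_cont (hp : 0 < p) : Continuous (fp p) := by
  unfold fp
  exact (cont_rpow_const p⁻¹ (by positivity)).comp <|
    continuous_const.mul (continuous_const.add (cont_rpow_const p hp.le))

lemma hq_cont (hp : 0 < p) : Continuous (hq p) := by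
  unfold hq
  exact (cont_rpow_const p⁻¹ (by positivity)).comp <|
    ((continuous_const.mul (cont_rpow_const p hp.le)).sub continuous_const).max continuous_const

lemma kp_pos (hp : 0 < p) : 0 < kp p := by
  unfold kp; positivity

lemma fp_base_pos (hp : 0 < p) {x : ℝ} (hx : 0 ≤ x) : 0 < 2⁻¹ * (1 + x ^ p) := by
  have := Real.rpow_nonneg hx p
  positivity

lemma fp_pos (hp : 0 < p) {x : ℝ} (hx : 0 ≤ x) : 0 < fp p x :=
  Real.rpow_pos_of_pos (fp_base_pos hp hx) _

lemma fp_zero (hp : 0 < p) : fp p 0 = kp p := by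
  unfold fp kp
  rw [Real.zero_rpow hp.ne']
  norm_num

lemma hq_comp_fp (hp : 0 < p) {x : ℝ} (hx : 0 ≤ x) : hq p (fp p x) = x := by
  unfold hq fp
  have hxp : 0 ≤ x ^ p := Real.rpow_nonneg hx p
  have hb : (0:ℝ) ≤ 2⁻¹ * (1 + x ^ p) := (fp_base_pos hp hx).le
  rw [← Real.rpow_mul hb, inv_mul_cancel₀ hp.ne', Real.rpow_one]
  have : 2 * (2⁻¹ * (1 + x ^ p)) - 1 = x ^ p := by ring
  rw [this, max_eq_left hxp, ← Real.rpow_mul hx, mul_inv_cancel₀ hp.ne', Real.rpow_one]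

lemma kp_mul_le_fp (hp : 0 < p) {x : ℝ} (hx : 0 ≤ x) : kp p * x ≤ fp p x := by
  unfold kp fp
  have hxp : 0 ≤ x ^ p := Real.rpow_nonneg hx p
  have h1 : kp p * x = (2⁻¹ * x ^ p) ^ p⁻¹ := by
    unfold kp
    rw [Real.mul_rpow (by norm_num) hxp]
    congr 1
    rw [← Real.rpow_mul hx, mul_inv_cancel₀ hp.ne', Real.rpow_one]
  unfold kp at h1
  rw [h1]
  apply Real.rpow_le_rpow (by positivity) _ (by positivity)
  nlinarith [hxp]

lemma kp_le_fp (hp : 0 < p) {x : ℝ} (hx : 0 ≤ x) : kp p ≤ fp p x := by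
  unfold kp fp
  apply Real.rpow_le_rpow (by norm_num) _ (by positivity)
  have hxp : 0 ≤ x ^ p := Real.rpow_nonneg hx p
  nlinarith

lemma smul_fp_eq_Mp (hp : 0 < p) {s t : ℝ} (hs : 0 < s) (ht : 0 < t) :
    s * fp p (t / s) = Mp p s t := by
  unfold fp Mp
  have hsp : 0 < s ^ p := Real.rpow_pos_of_pos hs p
  have h1 : s = (s ^ p) ^ p⁻¹ := by
    rw [← Real.rpow_mul hs.le, mul_inv_cancel₀ hp.ne', Real.rpow_one]
  nth_rewrite 1 [h1]
  rw [← Real.mul_rpow hsp.le (by positivity)]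
  congr 1
  rw [Real.div_rpow ht.le hs.le]
  field_simp

lemma Mp_pos (hp : 0 < p) {s t : ℝ} (hs : 0 < s) (ht : 0 < t) : 0 < Mp p s t := by
  unfold Mp
  have := Real.rpow_pos_of_pos hs p
  have := Real.rpow_pos_of_pos ht p
  positivity

end KAP

namespace KAP

variable {p : ℝ}
variable {C : Type*} [CStarAlgebra C] [PartialOrder C] [StarOrderedRing C]

lemma spec_nonneg_of_cone {a : C} (h : a ∈ posDefCone C) :
    ∀ x ∈ spectrum ℝ a, 0 ≤ x := fun x hx => (cone_spec_pos h x hx).le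

/-- rpow of a positive scalar multiple. -/
lemma rpow_smul {t : ℝ} (ht : 0 < t) {a : C} (h : a ∈ posDefCone C) (y : ℝ) :
    (t • a) ^ y = t ^ y • a ^ y := by
  have hta : (0:C) ≤ t • a := smul_nonneg ht.le h.1
  have hcont : ContinuousOn (fun x : ℝ => x ^ y) ((t * ·) '' spectrum ℝ a) := by
    rintro x ⟨z, hz, rfl⟩
    have hz' : 0 < z := cone_spec_pos h z hz
    exact (Real.continuousAt_rpow_const _ y
      (Or.inl (by positivity))).continuousWithinAt
  have hcont' : ContinuousOn (fun x : ℝ => x ^ y) (spectrum ℝ a) := fun x hx =>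
    (Real.continuousAt_rpow_const x y (Or.inl (cone_spec_pos h x hx).ne')).continuousWithinAt
  rw [rpow_eq_cfc_real hta y, ← cfc_comp_const_mul t _ a hcont h.1.isSelfAdjoint]
  have : cfc (fun x : ℝ => (t * x) ^ y) a = cfc (fun x : ℝ => t ^ y * x ^ y) a := by
    apply cfc_congr
    intro x hx
    exact Real.mul_rpow ht.le (spec_nonneg_of_cone h x hx)
  rw [this, cfc_const_mul _ _ a hcont', ← rpow_eq_cfc_real h.1 y]

lemma pencil_smul_smul {s t : ℝ} (hs : 0 < s) (ht : 0 < t) {c : C} (hc : c ∈ posDefCone C) :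
    (s • c) ^ (-(2:ℝ)⁻¹) * (t • c) * (s • c) ^ (-(2:ℝ)⁻¹) = (t / s) • (1 : C) := by
  rw [rpow_smul hs hc]
  have h1 : c ^ (-(2:ℝ)⁻¹) * c * c ^ (-(2:ℝ)⁻¹) = 1 := by
    nth_rewrite 2 [← sq_mul_sq hc]
    calc c ^ (-(2:ℝ)⁻¹) * (c ^ ((2:ℝ)⁻¹) * c ^ ((2:ℝ)⁻¹)) * c ^ (-(2:ℝ)⁻¹)
        = (c ^ (-(2:ℝ)⁻¹) * c ^ ((2:ℝ)⁻¹)) * (c ^ ((2:ℝ)⁻¹) * c ^ (-(2:ℝ)⁻¹)) := by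
          simp only [mul_assoc]
      _ = 1 := by rw [isq_mul_sq hc, sq_mul_isq hc, mul_one]
  have hscal : s ^ (-(2:ℝ)⁻¹) * t * s ^ (-(2:ℝ)⁻¹) = t / s := by
    rw [mul_comm (s ^ (-(2:ℝ)⁻¹)) t, mul_assoc, ← Real.rpow_add hs]
    norm_num
    rw [Real.rpow_neg_one]
    field_simp
  calc (s ^ (-(2:ℝ)⁻¹) • c ^ (-(2:ℝ)⁻¹)) * (t • c) * (s ^ (-(2:ℝ)⁻¹) • c ^ (-(2:ℝ)⁻¹))
      = (s ^ (-(2:ℝ)⁻¹) * t * s ^ (-(2:ℝ)⁻¹)) • (c ^ (-(2:ℝ)⁻¹) * c * c ^ (-(2:ℝ)⁻¹)) := by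
        simp only [smul_mul_assoc, mul_smul_comm, smul_smul]
        ring_nf
    _ = (t / s) • (1:C) := by rw [h1, hscal]

end KAP

namespace KAP

variable {p : ℝ}
variable {C : Type*} [CStarAlgebra C] [PartialOrder C] [StarOrderedRing C]

/-- The Kubo-Ando power mean as a cfc of the pencil, for `0 < p`. -/
lemma mean_eq_cfc (hp : 0 < p) {a b : C} (ha : a ∈ posDefCone C) (hb : b ∈ posDefCone C) :
    kuboAndoPowerMean p a b =
      a ^ ((2:ℝ)⁻¹) * cfc (fp p) (a ^ (-(2:ℝ)⁻¹) * b * a ^ (-(2:ℝ)⁻¹)) * a ^ ((2:ℝ)⁻¹) := by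
  set X := a ^ (-(2:ℝ)⁻¹) * b * a ^ (-(2:ℝ)⁻¹) with hXdef
  have hX : X ∈ posDefCone C := pencil_mem_cone ha hb
  have hXsa : IsSelfAdjoint X := hX.1.isSelfAdjoint
  have hcontp : ContinuousOn (fun x : ℝ => x ^ p) (spectrum ℝ X) :=
    (cont_rpow_const p hp.le).continuousOn
  have hc1 : ContinuousOn (fun x : ℝ => 1 + x ^ p) (spectrum ℝ X) :=
    (continuous_const.add (cont_rpow_const p hp.le)).continuousOn
  have h2 : cfc (fun x : ℝ => 1 + x ^ p) X = 1 + X ^ p := by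
    rw [cfc_const_add (1:ℝ) (fun x : ℝ => x ^ p) X hcontp hXsa,
      ← rpow_eq_cfc_real hX.1 p, map_one]
  have h3 : cfc (fun x : ℝ => 2⁻¹ * (1 + x ^ p)) X = (2:ℝ)⁻¹ • (1 + X ^ p) := by
    rw [cfc_const_mul (2⁻¹:ℝ) (fun x : ℝ => 1 + x ^ p) X hc1, h2]
  have hbase_nonneg : (0:C) ≤ (2:ℝ)⁻¹ • (1 + X ^ p) := by
    rw [← h3]
    apply cfc_nonneg
    intro x hx
    have hx' : 0 ≤ x := spectrum_nonneg_of_nonneg hX.1 hx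
    have := Real.rpow_nonneg hx' p
    positivity
  have h4 : ((2:ℝ)⁻¹ • (1 + X ^ p)) ^ p⁻¹ = cfc (fp p) X := by
    rw [rpow_eq_cfc_real hbase_nonneg p⁻¹, ← h3,
      ← cfc_comp' (fun x : ℝ => x ^ p⁻¹) (fun x : ℝ => 2⁻¹ * (1 + x ^ p)) X
        ((cont_rpow_const p⁻¹ (by positivity)).continuousOn)
        ((continuous_const.mul (continuous_const.add (cont_rpow_const p hp.le))).continuousOn)
        hXsa]
    rfl
  rw [kuboAndoPowerMean, ← hXdef, h4]

lemma mean_mem_cone (hp : 0 < p) {a b : C} (ha : a ∈ posDefCone C) (hb : b ∈ posDefCone C) :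
    kuboAndoPowerMean p a b ∈ posDefCone C := by
  rw [mean_eq_cfc hp ha hb]
  set X := a ^ (-(2:ℝ)⁻¹) * b * a ^ (-(2:ℝ)⁻¹) with hXdef
  have hX : X ∈ posDefCone C := pencil_mem_cone ha hb
  have hfpX : cfc (fp p) X ∈ posDefCone C := by
    constructor
    · exact cfc_nonneg fun x hx => (fp_pos hp (spectrum_nonneg_of_nonneg hX.1 hx)).le
    · exact isUnit_cfc (fp p) X (fp_cont hp).continuousOn hX.1.isSelfAdjoint
        fun x hx => (fp_pos hp (spectrum_nonneg_of_nonneg hX.1 hx)).ne'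
  constructor
  · have := star_left_conjugate_nonneg hfpX.1 (a ^ ((2:ℝ)⁻¹))
    rwa [rpow_selfAdjoint] at this
  · exact ((rpow_mem_cone ha _).2.mul hfpX.2).mul (rpow_mem_cone ha _).2

end KAP

namespace KAP

variable {p : ℝ}
variable {C : Type*} [CStarAlgebra C] [PartialOrder C] [StarOrderedRing C]

lemma mean_smul_smul (hp : 0 < p) {s t : ℝ} (hs : 0 < s) (ht : 0 < t)
    {c : C} (hc : c ∈ posDefCone C) :
    kuboAndoPowerMean p (s • c) (t • c) = Mp p s t • c := by
  rw [mean_eq_cfc hp (smul_mem_cone hs hc) (smul_mem_cone ht hc), pencil_smul_smul hs ht hc]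
  have h1 : ((t/s) • (1:C)) = algebraMap ℝ C (t/s) := (Algebra.algebraMap_eq_smul_one _).symm
  rw [h1, cfc_algebraMap (R := ℝ) (t/s) (fp p), rpow_smul hs hc]
  have h2 : algebraMap ℝ C (fp p (t/s)) = fp p (t/s) • 1 := Algebra.algebraMap_eq_smul_one _
  rw [h2]
  have hsq : s ^ ((2:ℝ)⁻¹) * s ^ ((2:ℝ)⁻¹) = s := by
    rw [← Real.rpow_add hs]
    norm_num
  calc (s ^ ((2:ℝ)⁻¹) • c ^ ((2:ℝ)⁻¹)) * (fp p (t/s) • 1) * (s ^ ((2:ℝ)⁻¹) • c ^ ((2:ℝ)⁻¹))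
      = (s ^ ((2:ℝ)⁻¹) * fp p (t/s) * s ^ ((2:ℝ)⁻¹)) •
          (c ^ ((2:ℝ)⁻¹) * 1 * c ^ ((2:ℝ)⁻¹)) := by
        simp only [smul_mul_assoc, mul_smul_comm, smul_smul]
        ring_nf
    _ = (s * fp p (t/s)) • c := by
        rw [mul_one, sq_mul_sq hc]
        congr 1
        rw [mul_comm (s ^ ((2:ℝ)⁻¹)) (fp p (t/s)), mul_assoc, hsq]
        ring
    _ = Mp p s t • c := by rw [smul_fp_eq_Mp hp hs ht]

lemma cfc_hq_comp_fp (hp : 0 < p) {X : C} (hX : X ∈ posDefCone C) :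
    cfc (hq p) (cfc (fp p) X) = X := by
  rw [← cfc_comp' (hq p) (fp p) X (hq_cont hp).continuousOn (fp_cont hp).continuousOn
    hX.1.isSelfAdjoint]
  have : cfc (fun x => hq p (fp p x)) X = cfc (fun x : ℝ => x) X := by
    apply cfc_congr
    intro x hx
    exact hq_comp_fp hp (spectrum_nonneg_of_nonneg hX.1 hx)
  rw [this, cfc_id' ℝ X hX.1.isSelfAdjoint]

lemma mean_inj (hp : 0 < p) {a b b' : C} (ha : a ∈ posDefCone C) (hb : b ∈ posDefCone C)
    (hb' : b' ∈ posDefCone C)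
    (h : kuboAndoPowerMean p a b = kuboAndoPowerMean p a b') : b = b' := by
  have h1 := h
  rw [mean_eq_cfc hp ha hb, mean_eq_cfc hp ha hb'] at h1
  have h2 : cfc (fp p) (a ^ (-(2:ℝ)⁻¹) * b * a ^ (-(2:ℝ)⁻¹)) =
      cfc (fp p) (a ^ (-(2:ℝ)⁻¹) * b' * a ^ (-(2:ℝ)⁻¹)) := by
    have := congrArg (fun z => a ^ (-(2:ℝ)⁻¹) * z * a ^ (-(2:ℝ)⁻¹)) h1
    simpa only [conj_isq_sq ha] using this
  have h3 := congrArg (cfc (hq p)) h2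
  rw [cfc_hq_comp_fp hp (pencil_mem_cone ha hb), cfc_hq_comp_fp hp (pencil_mem_cone ha hb')] at h3
  have := congrArg (fun z => a ^ ((2:ℝ)⁻¹) * z * a ^ ((2:ℝ)⁻¹)) h3
  simpa only [conj_sq_isq ha] using this

lemma smul_le_mean_right (hp : 0 < p) {a b : C} (ha : a ∈ posDefCone C)
    (hb : b ∈ posDefCone C) : kp p • b ≤ kuboAndoPowerMean p a b := by
  rw [mean_eq_cfc hp ha hb]
  set X := a ^ (-(2:ℝ)⁻¹) * b * a ^ (-(2:ℝ)⁻¹) with hXdef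
  have hX : X ∈ posDefCone C := pencil_mem_cone ha hb
  have h1 : cfc (fun x : ℝ => kp p * x) X ≤ cfc (fp p) X := by
    apply cfc_mono
    · intro x hx
      exact kp_mul_le_fp hp (spectrum_nonneg_of_nonneg hX.1 hx)
    · exact (continuous_const.mul continuous_id).continuousOn
    · exact (fp_cont hp).continuousOn
  rw [cfc_const_mul_id (kp p) X hX.1.isSelfAdjoint] at h1
  have h2 := star_left_conjugate_le_conjugate h1 (a ^ ((2:ℝ)⁻¹))
  rw [rpow_selfAdjoint] at h2
  calc kp p • b = a ^ ((2:ℝ)⁻¹) * (kp p • X) * a ^ ((2:ℝ)⁻¹) := by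
        rw [mul_smul_comm, smul_mul_assoc, conj_sq_isq ha]
    _ ≤ _ := h2

lemma smul_le_mean_left (hp : 0 < p) {a b : C} (ha : a ∈ posDefCone C)
    (hb : b ∈ posDefCone C) : kp p • a ≤ kuboAndoPowerMean p a b := by
  rw [mean_eq_cfc hp ha hb]
  set X := a ^ (-(2:ℝ)⁻¹) * b * a ^ (-(2:ℝ)⁻¹) with hXdef
  have hX : X ∈ posDefCone C := pencil_mem_cone ha hb
  have h1 : cfc (fun _ : ℝ => kp p) X ≤ cfc (fp p) X := by
    apply cfc_mono
    · intro x hx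
      exact kp_le_fp hp (spectrum_nonneg_of_nonneg hX.1 hx)
    · exact continuousOn_const
    · exact (fp_cont hp).continuousOn
  rw [cfc_const (kp p) X hX.1.isSelfAdjoint, Algebra.algebraMap_eq_smul_one] at h1
  have h2 := star_left_conjugate_le_conjugate h1 (a ^ ((2:ℝ)⁻¹))
  rw [rpow_selfAdjoint] at h2
  calc kp p • a = a ^ ((2:ℝ)⁻¹) * (kp p • 1) * a ^ ((2:ℝ)⁻¹) := by
        rw [mul_smul_comm, smul_mul_assoc, mul_one, sq_mul_sq ha]
    _ ≤ _ := h2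

end KAP

namespace KAP

open Filter

variable {C : Type*} [CStarAlgebra C] [PartialOrder C] [StarOrderedRing C]

lemma spec_mem_Icc [Nontrivial C] {y : C} (hy : 0 ≤ y) :
    ∀ t ∈ spectrum ℝ y, t ∈ Set.Icc 0 ‖y‖ := by
  intro t ht
  refine ⟨spectrum_nonneg_of_nonneg hy ht, ?_⟩
  have := spectrum.norm_le_norm_of_mem ht
  exact (le_abs_self t).trans (by simpa using this)

lemma cfc_near_poly [Nontrivial C] {g : ℝ → ℝ} (hg : Continuous g) {M ε : ℝ} (hε : 0 ≤ ε)
    (q : Polynomial ℝ) (hq : ∀ t ∈ Set.Icc (0:ℝ) M, |g t - q.eval t| ≤ ε)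
    {y : C} (hy : 0 ≤ y) (hyM : ‖y‖ ≤ M) :
    ‖cfc g y - Polynomial.aeval y q‖ ≤ ε := by
  have hsa : IsSelfAdjoint y := hy.isSelfAdjoint
  rw [← cfc_polynomial q y hsa, ← cfc_sub (fun t : ℝ => g t) (fun t => q.eval t) y
    hg.continuousOn q.continuous_aeval.continuousOn]
  refine norm_cfc_le hε ?_
  intro t ht
  have h1 := spec_mem_Icc hy t ht
  have h2 : t ∈ Set.Icc (0:ℝ) M := ⟨h1.1, h1.2.trans hyM⟩
  simpa using hq t h2

lemma tendsto_cfc_of_tendsto [Nontrivial C] {g : ℝ → ℝ} (hg : Continuous g)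
    {x : ℕ → C} {x₀ : C} (hx : ∀ n, 0 ≤ x n) (h₀ : 0 ≤ x₀)
    (hlim : Tendsto x atTop (nhds x₀)) :
    Tendsto (fun n => cfc g (x n)) atTop (nhds (cfc g x₀)) := by
  rw [Metric.tendsto_atTop]
  intro ε hε
  set M : ℝ := ‖x₀‖ + 1 with hM
  have hM0 : ‖x₀‖ ≤ M := by simp [hM]
  obtain ⟨q, hq⟩ := exists_polynomial_near_of_continuousOn 0 M g hg.continuousOn (ε/4)
    (by positivity)
  have hq' : ∀ t ∈ Set.Icc (0:ℝ) M, |g t - q.eval t| ≤ ε/4 := by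
    intro t ht
    rw [abs_sub_comm]
    exact (hq t ht).le
  -- eventually ‖x n‖ ≤ M
  have h1 : ∀ᶠ n in atTop, ‖x n‖ ≤ M := by
    filter_upwards [Metric.tendsto_nhds.mp hlim 1 one_pos] with n hn
    have : ‖x n - x₀‖ < 1 := by rwa [← dist_eq_norm]
    calc ‖x n‖ = ‖x₀ + (x n - x₀)‖ := by rw [add_sub_cancel]
      _ ≤ ‖x₀‖ + ‖x n - x₀‖ := norm_add_le _ _
      _ ≤ M := by rw [hM]; linarith
  have h2 : Tendsto (fun n => Polynomial.aeval (x n) q) atTop (nhds (Polynomial.aeval x₀ q)) :=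
    (q.continuous_aeval.tendsto x₀).comp hlim
  have h2' : ∀ᶠ n in atTop, dist (Polynomial.aeval (x n) q) (Polynomial.aeval x₀ q) < ε/4 :=
    Metric.tendsto_nhds.mp h2 (ε/4) (by positivity)
  obtain ⟨N, hN⟩ := Filter.eventually_atTop.mp (h1.and h2')
  refine ⟨N, fun n hn => ?_⟩
  obtain ⟨hn1, hn2⟩ := hN n hn
  have e1 : ‖cfc g (x n) - Polynomial.aeval (x n) q‖ ≤ ε/4 :=
    cfc_near_poly hg (by positivity) q hq' (hx n) hn1
  have e3 : ‖cfc g x₀ - Polynomial.aeval x₀ q‖ ≤ ε/4 :=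
    cfc_near_poly hg (by positivity) q hq' h₀ hM0
  calc dist (cfc g (x n)) (cfc g x₀)
      ≤ dist (cfc g (x n)) (Polynomial.aeval (x n) q) +
        dist (Polynomial.aeval (x n) q) (Polynomial.aeval x₀ q) +
        dist (Polynomial.aeval x₀ q) (cfc g x₀) := dist_triangle4 _ _ _ _
    _ < ε := by
        rw [dist_eq_norm, dist_eq_norm (Polynomial.aeval x₀ q), norm_sub_rev (Polynomial.aeval x₀ q)]
        linarith

end KAP

namespace KAP

open Filter

variable {p : ℝ}
variable {C : Type*} [CStarAlgebra C] [PartialOrder C] [StarOrderedRing C]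

lemma conj_continuous (u v : C) : Continuous (fun z : C => u * z * v) := by
  fun_prop

lemma cfc_fp_zero (hp : 0 < p) : cfc (fp p) (0 : C) = kp p • 1 := by
  rw [cfc_apply_zero, fp_zero hp, Algebra.algebraMap_eq_smul_one]

lemma mean_tendsto_of_tendsto_zero [Nontrivial C] (hp : 0 < p) {c : C} (hc : c ∈ posDefCone C)
    {Q : ℕ → C} (hQ : ∀ n, Q n ∈ posDefCone C) (hlim : Tendsto Q atTop (nhds 0)) :
    Tendsto (fun n => kuboAndoPowerMean p c (Q n)) atTop (nhds (kp p • c)) := by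
  have hW : ∀ n, c ^ (-(2:ℝ)⁻¹) * Q n * c ^ (-(2:ℝ)⁻¹) ∈ posDefCone C :=
    fun n => pencil_mem_cone hc (hQ n)
  have hWlim : Tendsto (fun n => c ^ (-(2:ℝ)⁻¹) * Q n * c ^ (-(2:ℝ)⁻¹)) atTop (nhds 0) := by
    have := (conj_continuous (c ^ (-(2:ℝ)⁻¹)) (c ^ (-(2:ℝ)⁻¹))).tendsto 0 |>.comp hlim
    simpa [Function.comp_def] using this
  have hcfc : Tendsto (fun n => cfc (fp p) (c ^ (-(2:ℝ)⁻¹) * Q n * c ^ (-(2:ℝ)⁻¹))) atTop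
      (nhds (kp p • 1)) := by
    have := tendsto_cfc_of_tendsto (fp_cont hp) (fun n => (hW n).1) le_rfl hWlim
    rwa [cfc_fp_zero hp] at this
  have hconj := (conj_continuous (c ^ ((2:ℝ)⁻¹)) (c ^ ((2:ℝ)⁻¹))).tendsto (kp p • 1) |>.comp hcfc
  have hend : c ^ ((2:ℝ)⁻¹) * (kp p • 1) * c ^ ((2:ℝ)⁻¹) = kp p • c := by
    rw [mul_smul_comm, smul_mul_assoc, mul_one, sq_mul_sq hc]
  rw [hend] at hconj
  have : (fun n => kuboAndoPowerMean p c (Q n)) = fun n =>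
      c ^ ((2:ℝ)⁻¹) * cfc (fp p) (c ^ (-(2:ℝ)⁻¹) * Q n * c ^ (-(2:ℝ)⁻¹)) * c ^ ((2:ℝ)⁻¹) := by
    ext n
    exact mean_eq_cfc hp hc (hQ n)
  rw [this]
  exact hconj

/-- recover the second argument of the mean -/
lemma mean_recover (hp : 0 < p) {c b : C} (hc : c ∈ posDefCone C) (hb : b ∈ posDefCone C) :
    b = c ^ ((2:ℝ)⁻¹) *
        cfc (hq p) (c ^ (-(2:ℝ)⁻¹) * kuboAndoPowerMean p c b * c ^ (-(2:ℝ)⁻¹)) *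
        c ^ ((2:ℝ)⁻¹) := by
  rw [mean_eq_cfc hp hc hb, conj_isq_sq hc, cfc_hq_comp_fp hp (pencil_mem_cone hc hb),
    conj_sq_isq hc]

end KAP

namespace KAP

open Filter

variable {p : ℝ}

section Main

variable {A B : Type*} [CStarAlgebra A] [PartialOrder A] [StarOrderedRing A]
  [CStarAlgebra B] [PartialOrder B] [StarOrderedRing B]

lemma kappa_homog [Nontrivial A] [Nontrivial B] (hp : 0 < p) (φ : A → B)
    (hφc : ContinuousOn φ (posDefCone A))
    (hφ : Set.BijOn φ (posDefCone A) (posDefCone B))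
    (hmean : ∀ a ∈ posDefCone A, ∀ b ∈ posDefCone A,
        φ (kuboAndoPowerMean p a b) = kuboAndoPowerMean p (φ a) (φ b)) :
    ∀ c ∈ posDefCone A, φ (kp p • c) = kp p • φ c := by
  have hκ : 0 < kp p := kp_pos hp
  set s : ℕ → ℝ := fun n => ((n : ℝ) + 1)⁻¹ with hsdef
  have hs : ∀ n, 0 < s n := fun n => by positivity
  have hs0 : Tendsto s atTop (nhds 0) := tendsto_one_div_add_atTop_nhds_zero_nat |>.congr
    (by intro n; simp [hsdef, one_div])
  -- the image sequence for each base point a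
  set Q : A → ℕ → B := fun a n => φ (s n • a) with hQdef
  have hQcone : ∀ a ∈ posDefCone A, ∀ n, Q a n ∈ posDefCone B :=
    fun a ha n => hφ.mapsTo (smul_mem_cone (hs n) ha)
  have hsmul0 : ∀ a : A, Tendsto (fun n => s n • a) atTop (nhds 0) := by
    intro a
    have := hs0.smul_const a
    simpa using this
  -- Step C : for all c a in the cone, the means of φ c and `Q a n` tend to φ (κ • c)
  have stepC : ∀ c ∈ posDefCone A, ∀ a ∈ posDefCone A,
      Tendsto (fun n => kuboAndoPowerMean p (φ c) (Q a n)) atTop (nhds (φ (kp p • c))) := by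
    intro c hc a ha
    have hmcone : ∀ n, kuboAndoPowerMean p c (s n • a) ∈ posDefCone A :=
      fun n => mean_mem_cone hp hc (smul_mem_cone (hs n) ha)
    have hmlim : Tendsto (fun n => kuboAndoPowerMean p c (s n • a)) atTop
        (nhds (kp p • c)) :=
      mean_tendsto_of_tendsto_zero hp hc (fun n => smul_mem_cone (hs n) ha) (hsmul0 a)
    have hφcont : Tendsto (fun n => φ (kuboAndoPowerMean p c (s n • a))) atTop
        (nhds (φ (kp p • c))) := by
      have hκc : kp p • c ∈ posDefCone A := smul_mem_cone hκ hc
      have := (hφc (kp p • c) hκc).tendsto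
      refine this.comp ?_
      rw [tendsto_nhdsWithin_iff]
      exact ⟨hmlim, Filter.Eventually.of_forall fun n => hmcone n⟩
    have heq : (fun n => φ (kuboAndoPowerMean p c (s n • a))) =
        fun n => kuboAndoPowerMean p (φ c) (Q a n) := by
      ext n
      exact hmean c hc (s n • a) (smul_mem_cone (hs n) ha)
    rwa [heq] at hφcont
  -- Step D : the sequence Q a n converges to a limit L independent of a
  have h1A : (1:A) ∈ posDefCone A := one_mem_cone
  set C₀ : B := φ 1 with hC₀def
  have hC₀ : C₀ ∈ posDefCone B := hφ.mapsTo h1A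
  set L : B := C₀ ^ ((2:ℝ)⁻¹) *
      cfc (hq p) (C₀ ^ (-(2:ℝ)⁻¹) * φ (kp p • 1) * C₀ ^ (-(2:ℝ)⁻¹)) * C₀ ^ ((2:ℝ)⁻¹)
    with hLdef
  have stepD : ∀ a ∈ posDefCone A, Tendsto (Q a) atTop (nhds L) := by
    intro a ha
    set V : ℕ → B := fun n => C₀ ^ (-(2:ℝ)⁻¹) * kuboAndoPowerMean p C₀ (Q a n) * C₀ ^ (-(2:ℝ)⁻¹)
      with hVdef
    have hVnonneg : ∀ n, (0:B) ≤ V n :=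
      fun n => (pencil_mem_cone hC₀ (mean_mem_cone hp hC₀ (hQcone a ha n))).1
    have hVlim : Tendsto V atTop
        (nhds (C₀ ^ (-(2:ℝ)⁻¹) * φ (kp p • 1) * C₀ ^ (-(2:ℝ)⁻¹))) :=
      ((conj_continuous _ _).tendsto _).comp (stepC 1 h1A a ha)
    have hVinf : (0:B) ≤ C₀ ^ (-(2:ℝ)⁻¹) * φ (kp p • 1) * C₀ ^ (-(2:ℝ)⁻¹) :=
      CStarAlgebra.isClosed_nonneg.mem_of_tendsto hVlim (Filter.Eventually.of_forall hVnonneg)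
    have hcfc : Tendsto (fun n => cfc (hq p) (V n)) atTop
        (nhds (cfc (hq p) (C₀ ^ (-(2:ℝ)⁻¹) * φ (kp p • 1) * C₀ ^ (-(2:ℝ)⁻¹)))) :=
      tendsto_cfc_of_tendsto (hq_cont hp) hVnonneg hVinf hVlim
    have hrecover : (Q a) = fun n => C₀ ^ ((2:ℝ)⁻¹) * cfc (hq p) (V n) * C₀ ^ ((2:ℝ)⁻¹) := by
      ext n
      exact mean_recover hp hC₀ (hQcone a ha n)
    rw [hrecover, hLdef]
    exact ((conj_continuous _ _).tendsto _).comp hcfc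
  -- L is nonnegative
  have hLnonneg : (0:B) ≤ L :=
    CStarAlgebra.isClosed_nonneg.mem_of_tendsto (stepD 1 h1A)
      (Filter.Eventually.of_forall fun n => (hQcone 1 h1A n).1)
  -- Step E : φ (κ • c) ≥ κ • L for every c in the cone
  have stepE : ∀ c ∈ posDefCone A, kp p • L ≤ φ (kp p • c) := by
    intro c hc
    have hlb : ∀ n, (0:B) ≤ kuboAndoPowerMean p (φ c) (Q c n) - kp p • Q c n := by
      intro n
      rw [sub_nonneg]
      exact smul_le_mean_right hp (hφ.mapsTo hc) (hQcone c hc n)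
    have hlim : Tendsto (fun n => kuboAndoPowerMean p (φ c) (Q c n) - kp p • Q c n) atTop
        (nhds (φ (kp p • c) - kp p • L)) :=
      (stepC c hc c hc).sub ((stepD c hc).const_smul (kp p))
    have := CStarAlgebra.isClosed_nonneg.mem_of_tendsto hlim (Filter.Eventually.of_forall hlb)
    simpa [sub_nonneg] using this
  -- Step F : every element of the cone of B dominates κ • L
  have stepF : ∀ z ∈ posDefCone B, kp p • L ≤ z := by
    intro z hz
    obtain ⟨c', hc', hczeq⟩ := hφ.surjOn hz
    have hc : (kp p)⁻¹ • c' ∈ posDefCone A := smul_mem_cone (by positivity) hc'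
    have : kp p • ((kp p)⁻¹ • c') = c' := by
      rw [smul_smul, mul_inv_cancel₀ hκ.ne', one_smul]
    have := stepE _ hc
    rwa [‹kp p • ((kp p)⁻¹ • c') = c'›, hczeq] at this
  -- Step G : L = 0
  have stepG : L = 0 := by
    have h1 : ∀ n, (0:B) ≤ s n • (1:B) - kp p • L := by
      intro n
      rw [sub_nonneg]
      exact stepF _ (smul_mem_cone (hs n) one_mem_cone)
    have h2 : Tendsto (fun n => s n • (1:B) - kp p • L) atTop (nhds (0 - kp p • L)) := by
      have := hs0.smul_const (1:B)
      simpa using (this.sub tendsto_const_nhds)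
    have h3 := CStarAlgebra.isClosed_nonneg.mem_of_tendsto h2 (Filter.Eventually.of_forall h1)
    rw [zero_sub] at h3
    have h4 : kp p • L ≤ 0 := by simpa using neg_nonneg.mp (by simpa using h3)
    have h5 : (0:B) ≤ kp p • L := smul_nonneg hκ.le hLnonneg
    have h6 : kp p • L = 0 := le_antisymm h4 h5
    have := congrArg (fun z => (kp p)⁻¹ • z) h6
    simpa [smul_smul, inv_mul_cancel₀ hκ.ne'] using this
  -- Step H : conclude
  intro c hc
  have hQ0 : Tendsto (Q c) atTop (nhds 0) := stepG ▸ stepD c hc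
  have hmean0 : Tendsto (fun n => kuboAndoPowerMean p (φ c) (Q c n)) atTop
      (nhds (kp p • φ c)) :=
    mean_tendsto_of_tendsto_zero hp (hφ.mapsTo hc) (hQcone c hc) hQ0
  exact tendsto_nhds_unique (stepC c hc c hc) hmean0

end Main

end KAP

namespace KAP

open Filter

variable {p : ℝ}

section Main2

variable {A B : Type*} [CStarAlgebra A] [PartialOrder A] [StarOrderedRing A]
  [CStarAlgebra B] [PartialOrder B] [StarOrderedRing B]

lemma rpow_inv_p_pow (hp : 0 < p) {x : ℝ} (hx : 0 ≤ x) : (x ^ p⁻¹) ^ p = x := by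
  rw [← Real.rpow_mul hx, inv_mul_cancel₀ hp.ne', Real.rpow_one]

lemma all_homog [Nontrivial A] [Nontrivial B] (hp : 0 < p) (φ : A → B)
    (hφc : ContinuousOn φ (posDefCone A))
    (hφ : Set.BijOn φ (posDefCone A) (posDefCone B))
    (hmean : ∀ a ∈ posDefCone A, ∀ b ∈ posDefCone A,
        φ (kuboAndoPowerMean p a b) = kuboAndoPowerMean p (φ a) (φ b)) :
    ∀ t : ℝ, 0 < t → ∀ c ∈ posDefCone A, φ (t • c) = t • φ c := by
  set T : Set ℝ := {t | 0 < t ∧ ∀ c ∈ posDefCone A, φ (t • c) = t • φ c} with hTdef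
  have hT1 : (1:ℝ) ∈ T := ⟨one_pos, fun c _ => by simp⟩
  have hTκ : kp p ∈ T := ⟨kp_pos hp, kappa_homog hp φ hφc hφ hmean⟩
  have hTmul : ∀ t ∈ T, ∀ u ∈ T, t * u ∈ T := by
    rintro t ⟨ht, hT⟩ u ⟨hu, hU⟩
    refine ⟨by positivity, fun c hc => ?_⟩
    rw [mul_smul, hT _ (smul_mem_cone hu hc), hU c hc, smul_smul]
  have hTM : ∀ t ∈ T, ∀ u ∈ T, Mp p t u ∈ T := by
    rintro t ⟨ht, hT⟩ u ⟨hu, hU⟩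
    refine ⟨Mp_pos hp ht hu, fun c hc => ?_⟩
    have hφc' : φ c ∈ posDefCone B := hφ.mapsTo hc
    rw [← mean_smul_smul hp ht hu hc, hmean _ (smul_mem_cone ht hc) _ (smul_mem_cone hu hc),
      hT c hc, hU c hc, mean_smul_smul hp ht hu hφc']
  have hTanti : ∀ t ∈ T, ∀ u : ℝ, 0 < u → Mp p t u ∈ T → u ∈ T := by
    rintro t ⟨ht, hT⟩ u hu ⟨hM, hMT⟩
    refine ⟨hu, fun c hc => ?_⟩
    have hφc' : φ c ∈ posDefCone B := hφ.mapsTo hc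
    have h1 : φ (kuboAndoPowerMean p (t • c) (u • c)) =
        kuboAndoPowerMean p (t • φ c) (φ (u • c)) := by
      rw [hmean _ (smul_mem_cone ht hc) _ (smul_mem_cone hu hc), hT c hc]
    have h2 : φ (kuboAndoPowerMean p (t • c) (u • c)) =
        kuboAndoPowerMean p (t • φ c) (u • φ c) := by
      rw [mean_smul_smul hp ht hu hc, hMT c hc, mean_smul_smul hp ht hu hφc']
    exact mean_inj hp (smul_mem_cone ht hφc') (hφ.mapsTo (smul_mem_cone hu hc))
      (smul_mem_cone hu hφc') (h1.symm.trans h2)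
  have hTlim : ∀ (t : ℝ), 0 < t → ∀ (u : ℕ → ℝ), (∀ k, u k ∈ T) →
      Tendsto u atTop (nhds t) → t ∈ T := by
    intro t ht u hu hul
    refine ⟨ht, fun c hc => ?_⟩
    have h1 : Tendsto (fun k => u k • c) atTop (nhds (t • c)) := hul.smul_const c
    have h2 : Tendsto (fun k => φ (u k • c)) atTop (nhds (φ (t • c))) := by
      refine (hφc (t • c) (smul_mem_cone ht hc)).tendsto.comp ?_
      rw [tendsto_nhdsWithin_iff]
      exact ⟨h1, Filter.Eventually.of_forall fun k => smul_mem_cone (hu k).1 hc⟩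
    have h3 : Tendsto (fun k => φ (u k • c)) atTop (nhds (t • φ c)) := by
      have : (fun k => φ (u k • c)) = fun k => u k • φ c := by
        ext k
        exact (hu k).2 c hc
      rw [this]
      exact hul.smul_const (φ c)
    exact tendsto_nhds_unique h2 h3
  -- the p-th power coordinate
  set St : ℝ → Prop := fun x => 0 < x ∧ x ^ p⁻¹ ∈ T with hStdef
  have hMp_eq : ∀ x y : ℝ, 0 < x → 0 < y →
      Mp p (x ^ p⁻¹) (y ^ p⁻¹) = (2⁻¹ * (x + y)) ^ p⁻¹ := by
    intro x y hx hy
    unfold Mp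
    rw [rpow_inv_p_pow hp hx.le, rpow_inv_p_pow hp hy.le]
  have hSt1 : St 1 := ⟨one_pos, by rw [Real.one_rpow]; exact hT1⟩
  have hSthalf : St 2⁻¹ := ⟨by norm_num, hTκ⟩
  have hStmid : ∀ x y, St x → St y → St (2⁻¹ * (x + y)) := by
    rintro x y ⟨hx, hxT⟩ ⟨hy, hyT⟩
    refine ⟨by positivity, ?_⟩
    rw [← hMp_eq x y hx hy]
    exact hTM _ hxT _ hyT
  have hStanti : ∀ x z, St x → 0 < z → St (2⁻¹ * (x + z)) → St z := by
    rintro x z ⟨hx, hxT⟩ hz ⟨hmid, hmidT⟩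
    refine ⟨hz, ?_⟩
    refine hTanti _ hxT _ (Real.rpow_pos_of_pos hz _) ?_
    rw [hMp_eq x z hx hz]
    exact hmidT
  have hStmul : ∀ x y, St x → St y → St (x * y) := by
    rintro x y ⟨hx, hxT⟩ ⟨hy, hyT⟩
    refine ⟨by positivity, ?_⟩
    rw [Real.mul_rpow hx.le hy.le]
    exact hTmul _ hxT _ hyT
  -- all positive integers
  have hStnat : ∀ k : ℕ, St ((k:ℝ) + 1) := by
    have hpair : ∀ k : ℕ, St ((k:ℝ) + 1) ∧ St ((k:ℝ) + 2) := by
      intro k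
      induction k with
      | zero =>
        constructor
        · simpa using hSt1
        · -- St 2 : first get St (3/2) from the anti property with x = 1/2, z = 3/2
          have h32 : St (3/2 : ℝ) := by
            apply hStanti 2⁻¹ (3/2) hSthalf (by norm_num)
            have : (2⁻¹ * (2⁻¹ + 3/2) : ℝ) = 1 := by norm_num
            rw [this]
            exact hSt1
          have h2 : St 2 := by
            apply hStanti 1 2 hSt1 (by norm_num)
            have : (2⁻¹ * (1 + 2) : ℝ) = 3/2 := by norm_num
            rw [this]
            exact h32
          simpa using h2
      | succ k ih =>
        have e1 : ((k:ℝ)+2) = ((k+1:ℕ):ℝ)+1 := by push_cast; ring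
        have e2 : ((k:ℝ)+3) = ((k+1:ℕ):ℝ)+2 := by push_cast; ring
        constructor
        · rw [← e1]; exact ih.2
        · rw [← e2]
          apply hStanti ((k:ℝ)+1) ((k:ℝ)+3) ih.1 (by positivity)
          have : (2⁻¹ * (((k:ℝ)+1) + ((k:ℝ)+3))) = (k:ℝ) + 2 := by ring
          rw [this]
          exact ih.2
    exact fun k => (hpair k).1
  -- dyadics
  have hStdyadic : ∀ (m n : ℕ), St (((m:ℝ) + 1) * (2⁻¹)^n) := by
    intro m n
    induction n with
    | zero => simpa using hStnat m
    | succ n ih =>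
      have := hStmul _ _ ih hSthalf
      convert this using 1
      ring
  -- conclusion
  intro t ht c hc
  set x : ℝ := t ^ p with hxdef
  have hx : 0 < x := Real.rpow_pos_of_pos ht p
  set u : ℕ → ℝ := fun k => (((⌊x * 2^k⌋₊ : ℝ) + 1) * (2⁻¹)^k) ^ p⁻¹ with hudef
  have huT : ∀ k, u k ∈ T := fun k => (hStdyadic ⌊x * 2^k⌋₊ k).2
  have hulim : Tendsto u atTop (nhds t) := by
    have hxk : Tendsto (fun k => ((⌊x * 2^k⌋₊ : ℝ) + 1) * (2⁻¹)^k) atTop (nhds x) := by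
      have hbound : ∀ k : ℕ, ‖((⌊x * 2^k⌋₊ : ℝ) + 1) * (2⁻¹)^k - x‖ ≤ (2⁻¹)^k := by
        intro k
        have h4 : (0:ℝ) < (2⁻¹)^k := by positivity
        have h3 : ((2:ℝ)⁻¹)^k * 2^k = 1 := by
          rw [← mul_pow]
          norm_num
        have h1 : (⌊x * 2^k⌋₊ : ℝ) ≤ x * 2^k := Nat.floor_le (by positivity)
        have h2 : x * 2^k < (⌊x * 2^k⌋₊ : ℝ) + 1 := Nat.lt_floor_add_one _
        rw [Real.norm_eq_abs, abs_le]
        constructor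
        · nlinarith [mul_lt_mul_of_pos_right h2 h4]
        · nlinarith [mul_le_mul_of_nonneg_right h1 h4.le]
      have hz : Tendsto (fun k : ℕ => ((2:ℝ)⁻¹)^k) atTop (nhds 0) :=
        tendsto_pow_atTop_nhds_zero_of_lt_one (by norm_num) (by norm_num)
      have := squeeze_zero_norm hbound hz
      simpa using tendsto_sub_nhds_zero_iff.mp this
    have hcont : ContinuousAt (fun y : ℝ => y ^ p⁻¹) x :=
      Real.continuousAt_rpow_const x p⁻¹ (Or.inl hx.ne')
    have := hcont.tendsto.comp hxk
    have hxt : x ^ p⁻¹ = t := by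
      rw [hxdef, ← Real.rpow_mul ht.le, mul_inv_cancel₀ hp.ne', Real.rpow_one]
    rwa [hxt] at this
  exact (hTlim t ht u huT hulim).2 c hc

end Main2

end KAP

namespace KAP

variable {p : ℝ}
variable {C : Type*} [CStarAlgebra C] [PartialOrder C] [StarOrderedRing C]

lemma inv_eq_rpow {a : C} (h : a ∈ posDefCone C) : Ring.inverse a = a ^ (-1:ℝ) := by
  have h1 : (h.2.unit : C) ^ (-1:ℝ) = ((h.2.unit⁻¹ : Cˣ) : C) :=
    CFC.rpow_neg_one_eq_inv h.2.unit (by rw [h.2.unit_spec]; exact h.1)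
  rw [← h.2.unit_spec, Ring.inverse_unit, ← h1, h.2.unit_spec]

lemma inv_mem_cone {a : C} (h : a ∈ posDefCone C) : Ring.inverse a ∈ posDefCone C := by
  rw [inv_eq_rpow h]
  exact rpow_mem_cone h _

lemma inv_rpow {a : C} (h : a ∈ posDefCone C) (y : ℝ) :
    (Ring.inverse a) ^ y = a ^ (-y) := by
  rw [inv_eq_rpow h]
  rw [CFC.rpow_rpow a (-1) y (by norm_num) (h.2.isStrictlyPositive h.1)]
  norm_num

lemma inv_inv_cone {a : C} (h : a ∈ posDefCone C) : Ring.inverse (Ring.inverse a) = a := by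
  rw [← h.2.unit_spec, Ring.inverse_unit, Ring.inverse_unit, inv_inv]

lemma mul_inv_cone {a : C} (h : a ∈ posDefCone C) : a * Ring.inverse a = 1 :=
  Ring.mul_inverse_cancel a h.2

lemma inv_mul_cone {a : C} (h : a ∈ posDefCone C) : Ring.inverse a * a = 1 :=
  Ring.inverse_mul_cancel a h.2

lemma mul_cancel_left {u v : C} (huv : u * v = 1) (x : C) : u * (v * x) = x := by
  rw [← mul_assoc, huv, one_mul]

/-- inverse of a conjugated rpow -/
lemma inv_conj_rpow {a z : C} (ha : a ∈ posDefCone C) (hz : z ∈ posDefCone C) (e : ℝ) :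
    Ring.inverse (a ^ (-(2:ℝ)⁻¹) * z ^ e * a ^ (-(2:ℝ)⁻¹)) =
      a ^ ((2:ℝ)⁻¹) * z ^ (-e) * a ^ ((2:ℝ)⁻¹) := by
  have hze : z ^ e * z ^ (-e) = 1 := by
    rw [rpow_mul_rpow hz]
    norm_num
    exact CFC.rpow_zero z hz.1
  have hze' : z ^ (-e) * z ^ e = 1 := by
    rw [rpow_mul_rpow hz]
    norm_num
    exact CFC.rpow_zero z hz.1
  have h1 : (a ^ (-(2:ℝ)⁻¹) * z ^ e * a ^ (-(2:ℝ)⁻¹)) *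
      (a ^ ((2:ℝ)⁻¹) * z ^ (-e) * a ^ ((2:ℝ)⁻¹)) = 1 := by
    simp only [mul_assoc]
    rw [mul_cancel_left (isq_mul_sq ha), mul_cancel_left hze]
    exact isq_mul_sq ha
  have h2 : (a ^ ((2:ℝ)⁻¹) * z ^ (-e) * a ^ ((2:ℝ)⁻¹)) *
      (a ^ (-(2:ℝ)⁻¹) * z ^ e * a ^ (-(2:ℝ)⁻¹)) = 1 := by
    simp only [mul_assoc]
    rw [mul_cancel_left (sq_mul_isq ha), mul_cancel_left hze']
    exact sq_mul_isq ha
  let u : Cˣ := ⟨a ^ (-(2:ℝ)⁻¹) * z ^ e * a ^ (-(2:ℝ)⁻¹),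
    a ^ ((2:ℝ)⁻¹) * z ^ (-e) * a ^ ((2:ℝ)⁻¹), h1, h2⟩
  exact Ring.inverse_unit u

end KAP

namespace KAP

variable {C : Type*} [CStarAlgebra C] [PartialOrder C] [StarOrderedRing C]

lemma base_mem_cone {q : ℝ} {X : C} (hX : X ∈ posDefCone C) :
    (2:ℝ)⁻¹ • (1 + X ^ q) ∈ posDefCone C := by
  have hXq : X ^ q ∈ posDefCone C := rpow_mem_cone hX q
  have h1 : (2:ℝ)⁻¹ • (1:C) ≤ (2:ℝ)⁻¹ • (1 + X ^ q) := by
    apply smul_le_smul_of_nonneg_left _ (by norm_num)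
    exact le_add_of_nonneg_right hXq.1
  constructor
  · refine le_trans ?_ h1
    exact (smul_mem_cone (by norm_num) one_mem_cone).1
  · exact CStarAlgebra.isUnit_of_le _ h1
      ((smul_mem_cone (by norm_num : (0:ℝ) < 2⁻¹) one_mem_cone).2.isStrictlyPositive
        (smul_mem_cone (by norm_num : (0:ℝ) < 2⁻¹) one_mem_cone).1)

lemma mean_inverse {q : ℝ} (hq : q ≠ 0) {a b : C} (ha : a ∈ posDefCone C)
    (hb : b ∈ posDefCone C) :
    kuboAndoPowerMean (-q) a b =
      Ring.inverse (kuboAndoPowerMean q (Ring.inverse a) (Ring.inverse b)) := by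
  have hia : Ring.inverse a ∈ posDefCone C := inv_mem_cone ha
  have hib : Ring.inverse b ∈ posDefCone C := inv_mem_cone hb
  have hX : a ^ (-(2:ℝ)⁻¹) * b * a ^ (-(2:ℝ)⁻¹) ∈ posDefCone C := pencil_mem_cone ha hb
  have e1 : (Ring.inverse a) ^ (-(2:ℝ)⁻¹) = a ^ ((2:ℝ)⁻¹) := by
    rw [inv_rpow ha]; norm_num
  have e2 : (Ring.inverse a) ^ ((2:ℝ)⁻¹) = a ^ (-(2:ℝ)⁻¹) := by
    rw [inv_rpow ha]
  have hY : (Ring.inverse a) ^ (-(2:ℝ)⁻¹) * Ring.inverse b * (Ring.inverse a) ^ (-(2:ℝ)⁻¹) =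
      Ring.inverse (a ^ (-(2:ℝ)⁻¹) * b * a ^ (-(2:ℝ)⁻¹)) := by
    have h3 := inv_conj_rpow ha hb (1:ℝ)
    rw [CFC.rpow_one b hb.1] at h3
    rw [e1, h3, ← inv_eq_rpow hb]
  have hYq : ((Ring.inverse a) ^ (-(2:ℝ)⁻¹) * Ring.inverse b * (Ring.inverse a) ^ (-(2:ℝ)⁻¹)) ^ q
      = (a ^ (-(2:ℝ)⁻¹) * b * a ^ (-(2:ℝ)⁻¹)) ^ (-q) := by
    rw [hY, inv_rpow hX]
  rw [kuboAndoPowerMean, kuboAndoPowerMean, hYq, e2]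
  rw [inv_conj_rpow ha (base_mem_cone (q := -q) hX) q⁻¹, inv_neg]

end KAP

namespace KAP

variable {C : Type*} [CStarAlgebra C] [PartialOrder C] [StarOrderedRing C]

lemma inv_smul_cone {t : ℝ} (ht : t ≠ 0) {y : C} (hy : y ∈ posDefCone C) :
    Ring.inverse (t • y) = t⁻¹ • Ring.inverse y := by
  have h1 : (t • y) * (t⁻¹ • Ring.inverse y) = 1 := by
    rw [smul_mul_smul_comm, mul_inv_cancel₀ ht, mul_inv_cone hy, one_smul]
  have h2 : (t⁻¹ • Ring.inverse y) * (t • y) = 1 := by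
    rw [smul_mul_smul_comm, inv_mul_cancel₀ ht, inv_mul_cone hy, one_smul]
  exact Ring.inverse_unit ⟨t • y, t⁻¹ • Ring.inverse y, h1, h2⟩

lemma mean_inverse' {q : ℝ} (hq : q ≠ 0) {x y : C} (hx : x ∈ posDefCone C)
    (hy : y ∈ posDefCone C) :
    Ring.inverse (kuboAndoPowerMean q x y) =
      kuboAndoPowerMean (-q) (Ring.inverse x) (Ring.inverse y) := by
  have := mean_inverse hq (inv_mem_cone hx) (inv_mem_cone hy)
  rw [inv_inv_cone hx, inv_inv_cone hy] at this
  rw [this]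

lemma inv_bijOn : Set.BijOn (Ring.inverse : C → C) (posDefCone C) (posDefCone C) := by
  refine ⟨fun x hx => inv_mem_cone hx, ?_, ?_⟩
  · intro x hx y hy h
    rw [← inv_inv_cone hx, h, inv_inv_cone hy]
  · intro z hz
    exact ⟨Ring.inverse z, inv_mem_cone hz, inv_inv_cone hz⟩

lemma inv_contOn : ContinuousOn (Ring.inverse : C → C) (posDefCone C) :=
  fun x hx => (NormedRing.inverse_continuousAt hx.2.unit).continuousWithinAt

end KAP

namespace KAP

section Neg

variable {A B : Type*} [CStarAlgebra A] [PartialOrder A] [StarOrderedRing A]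
  [CStarAlgebra B] [PartialOrder B] [StarOrderedRing B]

lemma all_homog_neg [Nontrivial A] [Nontrivial B] {q : ℝ} (hq : 0 < q) (φ : A → B)
    (hφc : ContinuousOn φ (posDefCone A))
    (hφ : Set.BijOn φ (posDefCone A) (posDefCone B))
    (hmean : ∀ a ∈ posDefCone A, ∀ b ∈ posDefCone A,
        φ (kuboAndoPowerMean (-q) a b) = kuboAndoPowerMean (-q) (φ a) (φ b)) :
    ∀ t : ℝ, 0 < t → ∀ a ∈ posDefCone A, φ (t • a) = t • φ a := by
  set ψ : A → B := fun x => Ring.inverse (φ (Ring.inverse x)) with hψdef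
  have hψc : ContinuousOn ψ (posDefCone A) := by
    apply ContinuousOn.comp (inv_contOn (C := B)) (hφc.comp (inv_contOn (C := A))
      inv_bijOn.mapsTo)
    exact fun x hx => hφ.mapsTo (inv_mem_cone hx)
  have hψbij : Set.BijOn ψ (posDefCone A) (posDefCone B) :=
    (inv_bijOn (C := B)).comp (hφ.comp (inv_bijOn (C := A)))
  have hψmean : ∀ x ∈ posDefCone A, ∀ y ∈ posDefCone A,
      ψ (kuboAndoPowerMean q x y) = kuboAndoPowerMean q (ψ x) (ψ y) := by
    intro x hx y hy
    have hix : Ring.inverse x ∈ posDefCone A := inv_mem_cone hx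
    have hiy : Ring.inverse y ∈ posDefCone A := inv_mem_cone hy
    have hφix : φ (Ring.inverse x) ∈ posDefCone B := hφ.mapsTo hix
    have hφiy : φ (Ring.inverse y) ∈ posDefCone B := hφ.mapsTo hiy
    calc ψ (kuboAndoPowerMean q x y)
        = Ring.inverse (φ (kuboAndoPowerMean (-q) (Ring.inverse x) (Ring.inverse y))) := by
          rw [hψdef]
          simp only
          rw [mean_inverse' hq.ne' hx hy]
      _ = Ring.inverse (kuboAndoPowerMean (-q) (φ (Ring.inverse x)) (φ (Ring.inverse y))) := by
          rw [hmean _ hix _ hiy]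
      _ = Ring.inverse (Ring.inverse (kuboAndoPowerMean q
            (Ring.inverse (φ (Ring.inverse x))) (Ring.inverse (φ (Ring.inverse y))))) := by
          rw [← mean_inverse hq.ne' hφix hφiy]
      _ = kuboAndoPowerMean q (ψ x) (ψ y) := by
          rw [inv_inv_cone (mean_mem_cone hq (inv_mem_cone hφix) (inv_mem_cone hφiy))]
  have hψhom := all_homog hq ψ hψc hψbij hψmean
  intro t ht a ha
  have hx : Ring.inverse a ∈ posDefCone A := inv_mem_cone ha
  have h1 := hψhom t⁻¹ (by positivity) (Ring.inverse a) hx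
  have h2 : t⁻¹ • Ring.inverse a ∈ posDefCone A := smul_mem_cone (by positivity) hx
  have h3 : Ring.inverse (t⁻¹ • Ring.inverse a) = t • a := by
    rw [inv_smul_cone (by positivity : (t:ℝ)⁻¹ ≠ 0) hx, inv_inv, inv_inv_cone ha]
  rw [hψdef] at h1
  simp only at h1
  rw [h3, inv_inv_cone ha] at h1
  -- h1 : Ring.inverse (φ (t • a)) = t⁻¹ • Ring.inverse (φ a)
  have h4 : Ring.inverse (t • φ a) = t⁻¹ • Ring.inverse (φ a) :=
    inv_smul_cone ht.ne' (hφ.mapsTo ha)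
  have h5 : Ring.inverse (φ (t • a)) = Ring.inverse (t • φ a) := by rw [h1, h4]
  have := congrArg Ring.inverse h5
  rwa [inv_inv_cone (hφ.mapsTo (smul_mem_cone ht ha)),
    inv_inv_cone (smul_mem_cone ht (hφ.mapsTo ha))] at this

end Neg

end KAP

/-- A norm-continuous bijection between positive definite cones of unital
C*-algebras which preserves the Kubo–Ando `p`-th power mean (`0 ≠ p ∈ [-1,1]`) is
positively homogeneous. -/
theorem kuboAndo_preserver_positively_homogeneous (p : ℝ) (hp : p ≠ 0)
    (hp' : p ∈ Set.Icc (-1 : ℝ) 1) (φ : A → B) (hφc : ContinuousOn φ (posDefCone A))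
    (hφ : Set.BijOn φ (posDefCone A) (posDefCone B))
    (hmean : ∀ a ∈ posDefCone A, ∀ b ∈ posDefCone A,
        φ (kuboAndoPowerMean p a b) = kuboAndoPowerMean p (φ a) (φ b)) :
    ∀ t : ℝ, 0 < t → ∀ a ∈ posDefCone A, φ (t • a) = t • φ a := by
  intro t ht a ha
  rcases subsingleton_or_nontrivial B with hB | hB
  · exact Subsingleton.elim _ _
  rcases subsingleton_or_nontrivial A with hA | hA
  · have h1 : t • a = a := Subsingleton.elim _ _
    rw [h1]
    have hφa : φ a ∈ posDefCone B := hφ.mapsTo ha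
    have h2 : t • φ a ∈ posDefCone B := KAP.smul_mem_cone ht hφa
    obtain ⟨c, hc, hceq⟩ := hφ.surjOn h2
    have hca : c = a := Subsingleton.elim _ _
    rw [← hceq, hca]
  rcases lt_or_gt_of_ne hp with hneg | hpos
  · have hq : 0 < -p := by linarith
    have hmean' : ∀ a ∈ posDefCone A, ∀ b ∈ posDefCone A,
        φ (kuboAndoPowerMean (-(-p)) a b) = kuboAndoPowerMean (-(-p)) (φ a) (φ b) := by
      simpa only [neg_neg] using hmean
    exact KAP.all_homog_neg hq φ hφc hφ hmean' t ht a ha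
  · exact KAP.all_homog hpos φ hφc hφ hmean t ht a ha
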